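/- Let m be odd and ℓ ≥ 2. The number of simultaneous-conjugation orbits of non-commuting ℓ-tuples in the dihedral group D_{2m} equals (m^{ℓ−1} − 1)(2^ℓ − 1)/2. -/

import Mathlib

/-- Simultaneous conjugation on non-commuting `ℓ`-tuples in a group `G`. -/
def conjRel (G : Type*) [Group G] (ℓ : ℕ)
    (s t : {f : Fin ℓ → G // ¬ ∀ i j, Commute (f i) (f j)}) : Prop :=
  ∃ g : G, ∀ i, t.1 i = g * s.1 i * g⁻¹

open DihedralGroup Finset

namespace CardNoncommAux

variable {m : ℕ}

lemma add_self_zero (hodd : Odd m) {a : ZMod m} (h : a + a = 0) : a = 0 :=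
  (ZMod.add_self_eq_zero_iff_eq_zero hodd).mp h

lemma commute_r_r (i j : ZMod m) : Commute (r i) (r j) := by
  show r i * r j = r j * r i
  simp [add_comm]

lemma commute_r_sr (hodd : Odd m) {i j : ZMod m} :
    Commute (r i : DihedralGroup m) (sr j) ↔ i = 0 := by
  constructor
  · intro h
    have h2 : r i * sr j = sr j * r i := h
    simp only [r_mul_sr, sr_mul_r] at h2
    have h3 : j - i = j + i := by injection h2
    exact add_self_zero hodd (by linear_combination -h3)
  · rintro rfl
    rw [← one_def]
    exact Commute.one_left _

lemma commute_sr_sr (hodd : Odd m) {i j : ZMod m} :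
    Commute (sr i : DihedralGroup m) (sr j) ↔ i = j := by
  constructor
  · intro h
    have h2 : sr i * sr j = sr j * sr i := h
    simp only [sr_mul_sr] at h2
    have h3 : j - i = i - j := by injection h2
    have : (i - j) + (i - j) = 0 := by linear_combination -h3
    have := add_self_zero hodd this
    linear_combination this
  · rintro rfl
    exact Commute.refl _

section count
variable (m ℓ : ℕ) [NeZero m]

/-- commuting tuples as a Finset -/
def commF : Finset (Fin ℓ → DihedralGroup m) :=
  univ.filter (fun f => ∀ i j, f i * f j = f j * f i)

def rotF : Finset (Fin ℓ → DihedralGroup m) :=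
  (univ : Finset (Fin ℓ → ZMod m)).image (fun g i => r (g i))

def refF : Finset (Fin ℓ → DihedralGroup m) :=
  (univ : Finset (ZMod m)).biUnion (fun a =>
    ((univ : Finset (Fin ℓ → Bool)).filter (fun v => ∃ i, v i = true)).image
      (fun v i => if v i then sr a else 1))

lemma card_rotF : (rotF m ℓ).card = m ^ ℓ := by
  rw [rotF, Finset.card_image_of_injective]
  · simp [ZMod.card]
  · intro g g' h
    funext i
    have := congrFun h i
    simpa using this

lemma card_refF : (refF m ℓ).card = m * (2 ^ ℓ - 1) := by
  rw [refF, Finset.card_biUnion]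
  · have hone : ∀ (a : ZMod m),
        (((univ : Finset (Fin ℓ → Bool)).filter (fun v => ∃ i, v i = true)).image
          (fun v i => if v i then sr a else 1)).card = 2 ^ ℓ - 1 := by
      intro a
      rw [Finset.card_image_of_injective]
      · have h2 : ((univ : Finset (Fin ℓ → Bool)).filter (fun v => ∃ i, v i = true))
            = univ \ {fun _ => false} := by
          ext v
          simp only [mem_filter, mem_univ, true_and, mem_sdiff, mem_singleton]
          constructor
          · rintro ⟨i, hi⟩ h
            rw [h] at hi
            simp at hi
          · intro h
            by_contra hcon
            push_neg at hcon
            exact h (funext fun i => by simpa using hcon i)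
        rw [h2, Finset.card_sdiff_of_subset (by simp), card_singleton, card_univ]
        simp
      · intro v w h
        funext i
        have hi := congrFun h i
        by_cases hv : v i <;> by_cases hw : w i <;>
          simp [hv, hw, one_def, -r_zero] at hi ⊢
    simp [hone, mul_comm]
  · intro a _ b _ hab
    rw [Function.onFun, Finset.disjoint_left]
    intro f hf hf'
    simp only [mem_image, mem_filter, mem_univ, true_and] at hf hf'
    obtain ⟨v, ⟨i0, hi0⟩, rfl⟩ := hf
    obtain ⟨w, ⟨_, _⟩, hw⟩ := hf'
    have := congrFun hw i0
    simp only [hi0, if_true] at this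
    by_cases hwi : w i0
    · simp [hwi] at this; exact hab this.symm
    · simp [hwi, one_def, -r_zero] at this

lemma commF_eq (hodd : Odd m) : commF m ℓ = rotF m ℓ ∪ refF m ℓ := by
  ext f
  simp only [commF, mem_filter, mem_univ, true_and, mem_union]
  constructor
  · intro hc
    by_cases hall : ∀ i, ∃ b, f i = r b
    · left
      rw [rotF, mem_image]
      refine ⟨fun i => (hall i).choose, mem_univ _, ?_⟩
      funext i
      exact ((hall i).choose_spec).symm
    · right
      push_neg at hall
      obtain ⟨i0, hi0⟩ := hall
      obtain ⟨a, ha⟩ : ∃ a, f i0 = sr a := by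
        cases h : f i0 with
        | r b => exact absurd h (hi0 b)
        | sr b => exact ⟨b, rfl⟩
      rw [refF, mem_biUnion]
      refine ⟨a, mem_univ _, ?_⟩
      rw [mem_image]
      refine ⟨fun i => decide (f i = sr a), ?_, ?_⟩
      · simp only [mem_filter, mem_univ, true_and]
        exact ⟨i0, by simp [ha]⟩
      · funext i
        simp only [decide_eq_true_eq]
        by_cases hi : f i = sr a
        · simp [hi]
        · rw [if_neg hi]
          cases h : f i with
          | r b =>
            have hcom : Commute (r b : DihedralGroup m) (sr a) := by
              rw [← h, ← ha]; exact hc i i0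
            rw [commute_r_sr hodd] at hcom
            rw [hcom, ← one_def]
          | sr b =>
            have hcom : Commute (sr b : DihedralGroup m) (sr a) := by
              rw [← h, ← ha]; exact hc i i0
            rw [commute_sr_sr hodd] at hcom
            exact absurd (h.trans (by rw [hcom])) hi
  · intro h
    rcases h with h | h
    · rw [rotF, mem_image] at h
      obtain ⟨g, _, rfl⟩ := h
      intro i j
      exact commute_r_r (g i) (g j)
    · rw [refF, mem_biUnion] at h
      obtain ⟨a, _, h⟩ := h
      rw [mem_image] at h
      obtain ⟨v, _, rfl⟩ := h
      intro i j
      by_cases hi : v i <;> by_cases hj : v j <;> simp [hi, hj]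

lemma card_commF (hodd : Odd m) : (commF m ℓ).card = m ^ ℓ + m * (2 ^ ℓ - 1) := by
  rw [commF_eq m ℓ hodd, Finset.card_union_of_disjoint, card_rotF, card_refF]
  rw [Finset.disjoint_left]
  intro f hf hf'
  rw [rotF, mem_image] at hf
  obtain ⟨g, _, rfl⟩ := hf
  rw [refF, mem_biUnion] at hf'
  obtain ⟨a, _, hf'⟩ := hf'
  rw [mem_image] at hf'
  obtain ⟨v, hv, hveq⟩ := hf'
  simp only [mem_filter, mem_univ, true_and] at hv
  obtain ⟨i0, hi0⟩ := hv
  have := congrFun hveq i0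
  simp [hi0] at this

end count

section action
variable (m ℓ : ℕ)

abbrev NC := {f : Fin ℓ → DihedralGroup m // ¬ ∀ i j, Commute (f i) (f j)}

instance : MulAction (DihedralGroup m) (NC m ℓ) where
  smul g s := ⟨fun i => g * s.1 i * g⁻¹, fun h => s.2 fun i j => (Commute.conj_iff g).mp (h i j)⟩
  one_smul s := Subtype.ext (funext fun i => by
    show (1 : DihedralGroup m) * s.1 i * 1⁻¹ = s.1 i
    group)
  mul_smul g h s := Subtype.ext (funext fun i => by
    show (g * h) * s.1 i * (g * h)⁻¹ = g * (h * s.1 i * h⁻¹) * g⁻¹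
    group)

lemma smul_coe (g : DihedralGroup m) (s : NC m ℓ) (i : Fin ℓ) :
    ((g • s : NC m ℓ) : Fin ℓ → DihedralGroup m) i = g * s.1 i * g⁻¹ := rfl

lemma stabilizer_eq_bot (hodd : Odd m) (s : NC m ℓ) :
    MulAction.stabilizer (DihedralGroup m) s = ⊥ := by
  rw [eq_bot_iff]
  intro g hg
  rw [MulAction.mem_stabilizer_iff] at hg
  have hc : ∀ i, Commute g (s.1 i) := by
    intro i
    have h1 := congrFun (congrArg Subtype.val hg) i
    rw [smul_coe] at h1
    show g * s.1 i = s.1 i * g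
    calc g * s.1 i = (g * s.1 i * g⁻¹) * g := by group
    _ = s.1 i * g := by rw [h1]
  rw [Subgroup.mem_bot]
  cases g with
  | r a =>
    by_cases ha : a = 0
    · rw [ha, ← one_def]
    · exfalso
      apply s.2
      have hrot : ∀ i, ∃ b, s.1 i = r b := by
        intro i
        cases h : s.1 i with
        | r b => exact ⟨b, rfl⟩
        | sr b =>
          have hcb := hc i
          rw [h, commute_r_sr hodd] at hcb
          exact absurd hcb ha
      intro i j
      obtain ⟨b, hb⟩ := hrot i
      obtain ⟨c, hcq⟩ := hrot j
      rw [hb, hcq]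
      exact commute_r_r b c
  | sr a =>
    exfalso
    apply s.2
    have hmem : ∀ i, s.1 i = 1 ∨ s.1 i = sr a := by
      intro i
      cases h : s.1 i with
      | r b =>
        have hcb := hc i
        rw [h] at hcb
        have hb0 : b = 0 := (commute_r_sr hodd).mp hcb.symm
        left
        rw [hb0]
        exact one_def.symm
      | sr b =>
        have hcb := hc i
        rw [h, commute_sr_sr hodd] at hcb
        right
        rw [hcb]
    intro i j
    rcases hmem i with h1 | h1 <;> rcases hmem j with h2 | h2 <;> rw [h1, h2] <;>
      first
        | exact Commute.one_left _
        | exact Commute.one_right _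

noncomputable def e1 :
    NC m ℓ ≃ Σ ω : MulAction.orbitRel.Quotient (DihedralGroup m) (NC m ℓ),
      DihedralGroup m ⧸ MulAction.stabilizer (DihedralGroup m) ω.out :=
  MulAction.selfEquivSigmaOrbitsQuotientStabilizer (DihedralGroup m) (NC m ℓ)

end action
end CardNoncommAux

namespace CardNoncommAux
section action2
variable (m ℓ : ℕ)

noncomputable def e2 (hodd : Odd m) (ω : MulAction.orbitRel.Quotient (DihedralGroup m) (NC m ℓ)) :
    (DihedralGroup m ⧸ MulAction.stabilizer (DihedralGroup m) ω.out) ≃ DihedralGroup m :=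
  (Subgroup.quotientEquivOfEq (stabilizer_eq_bot m ℓ hodd ω.out)).trans
    QuotientGroup.quotientBot.toEquiv

noncomputable def ncEquiv (hodd : Odd m) :
    NC m ℓ ≃ MulAction.orbitRel.Quotient (DihedralGroup m) (NC m ℓ) × DihedralGroup m :=
  (e1 m ℓ).trans ((Equiv.sigmaCongrRight (e2 m ℓ hodd)).trans (Equiv.sigmaEquivProd _ _))

end action2
end CardNoncommAux

namespace CardNoncommAux
section action3
variable (m ℓ : ℕ)

noncomputable def quotEquiv :
    Quot (conjRel (DihedralGroup m) ℓ) ≃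
      MulAction.orbitRel.Quotient (DihedralGroup m) (NC m ℓ) :=
  Quot.congrRight (fun s t => by
    show (∃ g : DihedralGroup m, ∀ i, t.1 i = g * s.1 i * g⁻¹) ↔ s ∈ MulAction.orbit _ t
    rw [MulAction.mem_orbit_iff]
    constructor
    · rintro ⟨g, hg⟩
      refine ⟨g⁻¹, Subtype.ext (funext fun i => ?_)⟩
      rw [smul_coe, hg i]
      group
    · rintro ⟨g, hg⟩
      refine ⟨g⁻¹, fun i => ?_⟩
      have h1 := congrFun (congrArg Subtype.val hg) i
      rw [smul_coe] at h1
      rw [← h1]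
      group)

end action3
end CardNoncommAux

open CardNoncommAux in
/-- For `m` odd and `ℓ ≥ 2`, the number of simultaneous-conjugation orbits of non-commuting
`ℓ`-tuples in the dihedral group `D_{2m}` equals `(m^(ℓ-1) - 1)(2^ℓ - 1)/2`. -/
theorem card_noncommuting_tuples_orbits_dihedral_odd (m : ℕ) (hm : 0 < m) (hodd : Odd m)
    (ℓ : ℕ) (hℓ : 2 ≤ ℓ) :
    2 * Nat.card (Quot (conjRel (DihedralGroup m) ℓ)) = (m ^ (ℓ - 1) - 1) * (2 ^ ℓ - 1) := by

  haveI : NeZero m := ⟨hm.ne'⟩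
  have hquot : Nat.card (Quot (conjRel (DihedralGroup m) ℓ))
      = Nat.card (MulAction.orbitRel.Quotient (DihedralGroup m) (NC m ℓ)) :=
    Nat.card_congr (quotEquiv m ℓ)
  have hS : Nat.card (NC m ℓ)
      = Nat.card (MulAction.orbitRel.Quotient (DihedralGroup m) (NC m ℓ)) * (2 * m) := by
    have hD : Nat.card (DihedralGroup m) = 2 * m := by
      rw [Nat.card_eq_fintype_card, DihedralGroup.card]
    rw [Nat.card_congr (ncEquiv m ℓ hodd), Nat.card_prod, hD]
  have hcard : Nat.card (NC m ℓ) = (2 * m) ^ ℓ - (m ^ ℓ + m * (2 ^ ℓ - 1)) := by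
    have e : NC m ℓ ≃ {f : Fin ℓ → DihedralGroup m // ¬ ∀ i j, f i * f j = f j * f i} :=
      Equiv.subtypeEquivRight fun f => Iff.rfl
    rw [Nat.card_congr e, Nat.card_eq_fintype_card, Fintype.card_subtype]
    have h3 := Finset.card_filter_add_card_filter_not
      (s := (univ : Finset (Fin ℓ → DihedralGroup m)))
      (p := fun f => ∀ i j, f i * f j = f j * f i)
    have h4 : ((univ : Finset (Fin ℓ → DihedralGroup m)).filter
        (fun f => ∀ i j, f i * f j = f j * f i)).card
        = m ^ ℓ + m * (2 ^ ℓ - 1) := card_commF m ℓ hodd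
    have h5 : (univ : Finset (Fin ℓ → DihedralGroup m)).card = (2 * m) ^ ℓ := by
      rw [card_univ]
      simp [DihedralGroup.card]
    rw [h4, h5] at h3
    exact Nat.eq_sub_of_add_eq' h3
  rw [hquot]
  apply Nat.eq_of_mul_eq_mul_right hm
  have hmle : m ≤ m ^ ℓ := Nat.le_self_pow (by omega) m
  have h2le : 1 ≤ 2 ^ ℓ := Nat.one_le_two_pow
  have key : (2 * m) ^ ℓ - (m ^ ℓ + m * (2 ^ ℓ - 1))
      = (m ^ (ℓ - 1) - 1) * (2 ^ ℓ - 1) * m := by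
    have hpow : m ^ (ℓ - 1) * m = m ^ ℓ := by
      rw [← pow_succ]
      congr 1
      omega
    have hsub : (m ^ (ℓ - 1) - 1) * m = m ^ ℓ - m := by
      rw [Nat.sub_mul, one_mul, hpow]
    have h6 : (m ^ (ℓ - 1) - 1) * (2 ^ ℓ - 1) * m = (m ^ ℓ - m) * (2 ^ ℓ - 1) := by
      rw [mul_right_comm, hsub]
    rw [h6, mul_pow]
    obtain ⟨c, hc2⟩ : ∃ c, 2 ^ ℓ = c + 1 := ⟨2 ^ ℓ - 1, by omega⟩
    obtain ⟨d, hd⟩ : ∃ d, m ^ ℓ = m + d := ⟨m ^ ℓ - m, by omega⟩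
    rw [hc2, hd]
    simp only [Nat.add_sub_cancel, Nat.add_sub_cancel_left]
    have hx : (c + 1) * (m + d) = (m + d + m * c) + d * c := by ring
    rw [hx, Nat.add_sub_cancel_left]
  calc 2 * Nat.card (MulAction.orbitRel.Quotient (DihedralGroup m) (NC m ℓ)) * m
      = Nat.card (MulAction.orbitRel.Quotient (DihedralGroup m) (NC m ℓ)) * (2 * m) := by ring
  _ = (2 * m) ^ ℓ - (m ^ ℓ + m * (2 ^ ℓ - 1)) := by rw [← hS, hcard]
  _ = (m ^ (ℓ - 1) - 1) * (2 ^ ℓ - 1) * m := key
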